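/- Let L be a simple thin Lie algebra over GF(2) of dimension 2^n − 1 and α a root with ad(e_α) having characteristic polynomial t^r(t+1)^{2s}, s > 0. Then s(s+1) ≥ 2^n − 2. -/

import Mathlib

open Polynomial Matrix

/-- If a polynomial with nonzero constant coefficient times `X^c` equals
`X^r * (X+1)^(2s)`, then its degree is at most `2s`. -/
lemma poly_factor_degree_le {K : Type*} [Field K] (p : K[X]) (c r s : ℕ)
    (hpq : p * X ^ c = X ^ r * (X + 1) ^ (2 * s)) (hp0 : p.coeff 0 ≠ 0) :
    p.natDegree ≤ 2 * s := by
  have hXp : ¬ (X ∣ p) := by rwa [Polynomial.X_dvd_iff]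
  have hcop : IsCoprime (X ^ r) p :=
    (((Polynomial.irreducible_X (R := K)).coprime_iff_not_dvd).mpr hXp).pow_left
  have hdvd : p ∣ X ^ r * (X + 1) ^ (2 * s) := ⟨X ^ c, hpq.symm⟩
  have hdvd2 : p ∣ (X + 1) ^ (2 * s) := (hcop.symm.dvd_of_dvd_mul_left hdvd)
  have hne : ((X + 1 : K[X])) ^ (2 * s) ≠ 0 := by
    have : ((X + 1 : K[X])).Monic := by simpa using Polynomial.monic_X_add_C (1 : K)
    exact (this.pow _).ne_zero
  have := Polynomial.natDegree_le_of_dvd hdvd2 hne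
  calc p.natDegree ≤ ((X + 1 : K[X]) ^ (2 * s)).natDegree := this
    _ = 2 * s := by
        rw [Polynomial.natDegree_pow, ← Polynomial.C_1, Polynomial.natDegree_X_add_C, mul_one]

lemma block_card_le {K : Type*} [Field K] {V : Type*} [AddCommGroup V] [Module K V]
    [Module.Finite K V] {ι : Type*} [Fintype ι] [DecidableEq ι]
    (b : Module.Basis ι K V) (f : Module.End K V)
    (hf : ∀ i, f (b i) = 0 ∨ ∃ j, f (b i) = b j)
    (h2 : ∀ i, f (f (b i)) = 0 ∨ f (f (b i)) = b i)
    (P : ι → Prop) [DecidablePred P] (hP : ∀ i, P i ↔ f (f (b i)) = b i)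
    (r s : ℕ) (hchar : f.charpoly = X ^ r * (X + 1) ^ (2 * s)) :
    Fintype.card {i // P i} ≤ 2 * s := by
  classical
  set eqv : {i // P i} ⊕ {i // ¬ P i} ≃ ι := Equiv.sumCompl P with heqv
  set b' : Module.Basis ({i // P i} ⊕ {i // ¬ P i}) K V := b.reindex eqv.symm with hb'def
  have hb' : ∀ x, b' x = b (eqv x) := fun x => by
    rw [hb'def, Module.Basis.reindex_apply, Equiv.symm_symm]
  set M := LinearMap.toMatrix b' b' f with hMdef
  have key1 : ∀ i, P i → ∃ j, P j ∧ f (b i) = b j := by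
    intro i hPi
    have hfi := (hP i).mp hPi
    rcases hf i with h0 | ⟨j, hj⟩
    · exfalso; rw [h0, map_zero] at hfi; exact b.ne_zero i hfi.symm
    · refine ⟨j, ?_, hj⟩
      rw [hP j, ← hj, hfi]
  have key2 : ∀ i, ¬ P i → (f (b i) = 0 ∨ ∃ j, ¬ P j ∧ f (b i) = b j) := by
    intro i hPi
    rcases hf i with h0 | ⟨j, hj⟩
    · exact Or.inl h0
    · right; refine ⟨j, ?_, hj⟩
      intro hPj
      have hfj := (hP j).mp hPj
      have h2i : f (f (b i)) = 0 := by
        rcases h2 i with h | h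
        · exact h
        · exact absurd ((hP i).mpr h) hPi
      rw [hj] at h2i
      rw [h2i, map_zero] at hfj
      exact b.ne_zero j hfj.symm
  have hb12 : M.toBlocks₁₂ = 0 := by
    ext x y
    show M (Sum.inl x) (Sum.inr y) = 0
    rw [hMdef, LinearMap.toMatrix_apply, hb' (Sum.inr y)]
    have hy : eqv (Sum.inr y) = y.1 := Equiv.sumCompl_apply_inr y
    rw [hy]
    rcases key2 y.1 y.2 with h0 | ⟨j, hj, hfj⟩
    · rw [h0, map_zero]; simp
    · rw [hfj]
      have : b j = b' (Sum.inr ⟨j, hj⟩) := by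
        rw [hb' (Sum.inr ⟨j, hj⟩), Equiv.sumCompl_apply_inr]
      rw [this, Module.Basis.repr_self]
      simp
  have hb21 : M.toBlocks₂₁ = 0 := by
    ext x y
    show M (Sum.inr x) (Sum.inl y) = 0
    rw [hMdef, LinearMap.toMatrix_apply, hb' (Sum.inl y)]
    have hy : eqv (Sum.inl y) = y.1 := Equiv.sumCompl_apply_inl y
    rw [hy]
    obtain ⟨j, hj, hfj⟩ := key1 y.1 y.2
    rw [hfj]
    have : b j = b' (Sum.inl ⟨j, hj⟩) := by
      rw [hb' (Sum.inl ⟨j, hj⟩), Equiv.sumCompl_apply_inl]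
    rw [this, Module.Basis.repr_self]
    simp
  set A := M.toBlocks₁₁ with hAdef
  set D := M.toBlocks₂₂ with hDdef
  have hMblocks : M = Matrix.fromBlocks A 0 0 D := by
    conv_lhs => rw [← Matrix.fromBlocks_toBlocks M]
    rw [hb12, hb21]
  have hfact : f.charpoly = A.charpoly * D.charpoly := by
    rw [← LinearMap.charpoly_toMatrix f b', ← hMdef]
    conv_lhs => rw [hMblocks]
    exact Matrix.charpoly_fromBlocks_zero₁₂ A 0 D
  have hMM : M * M = LinearMap.toMatrix b' b' (f * f) :=
    (LinearMap.toMatrix_mul b' f f).symm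
  have hMMblocks : M * M = Matrix.fromBlocks (A * A) 0 0 (D * D) := by
    conv_lhs => rw [hMblocks]
    rw [Matrix.fromBlocks_multiply]
    simp
  have hAA : A * A = 1 := by
    ext x y
    have e1 : (A * A) x y = (M * M) (Sum.inl x) (Sum.inl y) := by
      rw [hMMblocks]; rfl
    rw [e1, hMM, LinearMap.toMatrix_apply, hb' (Sum.inl y), Equiv.sumCompl_apply_inl]
    have hPy : f (f (b y.1)) = b y.1 := (hP y.1).mp y.2
    show (b'.repr (f (f (b ↑y)))) (Sum.inl x) = (1 : Matrix _ _ K) x y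
    rw [hPy]
    have : b y.1 = b' (Sum.inl y) := by rw [hb' (Sum.inl y), Equiv.sumCompl_apply_inl]
    rw [this, Module.Basis.repr_self]
    simp [Finsupp.single_apply, Matrix.one_apply, eq_comm]
  have hDD : D * D = 0 := by
    ext x y
    have e1 : (D * D) x y = (M * M) (Sum.inr x) (Sum.inr y) := by
      rw [hMMblocks]; rfl
    rw [e1, hMM, LinearMap.toMatrix_apply, hb' (Sum.inr y), Equiv.sumCompl_apply_inr]
    have hPy : f (f (b y.1)) = 0 := by
      rcases h2 y.1 with h | h
      · exact h
      · exact absurd ((hP y.1).mpr h) y.2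
    show (b'.repr (f (f (b ↑y)))) (Sum.inr x) = (0 : Matrix _ _ K) x y
    rw [hPy, map_zero]
    simp
  have hdetA : A.charpoly.coeff 0 ≠ 0 := by
    intro h
    have hdet : A.det = 0 := by
      rw [Matrix.det_eq_sign_charpoly_coeff, h, mul_zero]
    have h1 : A.det * A.det = 1 := by
      rw [← Matrix.det_mul, hAA, Matrix.det_one]
    rw [hdet, mul_zero] at h1
    exact zero_ne_one h1
  have hDchar : D.charpoly = X ^ (Fintype.card {i // ¬ P i}) := by
    set g : Module.End K ({i // ¬ P i} → K) := Matrix.toLin' D with hgdef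
    have hgnil : IsNilpotent g := by
      refine ⟨2, ?_⟩
      rw [pow_two, Module.End.mul_eq_comp, hgdef, ← Matrix.toLin'_mul, hDD]
      exact LinearEquiv.map_zero _
    have h1 : g.charpoly = X ^ Module.finrank K ({i // ¬ P i} → K) :=
      IsNilpotent.charpoly_eq_X_pow_finrank hgnil
    have h2' : D.charpoly = g.charpoly := by
      have : LinearMap.toMatrix (Pi.basisFun K {i // ¬ P i}) (Pi.basisFun K {i // ¬ P i}) g
          = D := LinearMap.toMatrix'_toLin' D
      rw [← this, LinearMap.charpoly_toMatrix]
    rw [h2', h1, Module.finrank_pi]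
  have hprod : A.charpoly * X ^ (Fintype.card {i // ¬ P i}) = X ^ r * (X + 1) ^ (2 * s) := by
    rw [← hDchar, ← hfact, hchar]
  have hdeg := poly_factor_degree_le A.charpoly (Fintype.card {i // ¬ P i}) r s hprod hdetA
  rwa [Matrix.charpoly_natDegree_eq_dim] at hdeg

/-- Let `L` be a simple thin Lie algebra over `GF(2)` of dimension
`2^n - 1` and `α` a root with `ad (e α)` having characteristic polynomial
`t^r (t+1)^(2s)`, `s > 0`.  Then `s(s+1) ≥ 2^n - 2`. -/
theorem thin_simple_s_bound {n : ℕ} {L : Type*}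
    [LieRing L] [LieAlgebra (ZMod 2) L] [LieAlgebra.IsSimple (ZMod 2) L]
    [Module.Finite (ZMod 2) L]
    (b : Module.Basis {v : Fin n → ZMod 2 // v ≠ 0} (ZMod 2) L)
    (e : (Fin n → ZMod 2) → L)
    (he : ∀ (v : Fin n → ZMod 2) (hv : v ≠ 0), e v = b ⟨v, hv⟩)
    (he0 : e 0 = 0)
    (hbr : ∀ α β : Fin n → ZMod 2, ⁅e α, e β⁆ = 0 ∨ ⁅e α, e β⁆ = e (α + β))
    (α : Fin n → ZMod 2) (hα : α ≠ 0) (r s : ℕ) (hs : 0 < s)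
    (hchar : LinearMap.charpoly (LieAlgebra.ad (ZMod 2) L (e α)) =
      Polynomial.X ^ r * (Polynomial.X + 1) ^ (2 * s)) :
    2 ^ n - 2 ≤ s * (s + 1) := by
  classical
  set f : Module.End (ZMod 2) L := LieAlgebra.ad (ZMod 2) L (e α) with hfdef
  have hfap : ∀ x : L, f x = ⁅e α, x⁆ := fun x => LieAlgebra.ad_apply (ZMod 2) L (e α) x
  have hne_e : ∀ γ : Fin n → ZMod 2, γ ≠ 0 → e γ ≠ 0 := by
    intro γ h; rw [he γ h]; exact b.ne_zero _
  have haa : ∀ γ : Fin n → ZMod 2, γ + γ = 0 := by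
    intro γ; funext i; exact CharTwo.add_self_eq_zero (γ i)
  have haac : ∀ γ : Fin n → ZMod 2, α + (α + γ) = γ := by
    intro γ; rw [← add_assoc, haa α, zero_add]
  have hxx : ∀ x : L, x + x = 0 := by
    intro x
    have h2 : (2 : ZMod 2) = 0 := rfl
    rw [← two_smul (ZMod 2) x, h2, zero_smul]
  have hfe : ∀ γ, f (e γ) = 0 ∨ f (e γ) = e (α + γ) := by
    intro γ; rw [hfap]; exact hbr α γ
  have hf2 : ∀ γ, f (f (e γ)) = 0 ∨ f (f (e γ)) = e γ := by
    intro γ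
    rcases hfe γ with h | h
    · left; rw [h, map_zero]
    · rw [h]
      rcases hfe (α + γ) with h' | h'
      · left; exact h'
      · right; rw [h', haac]
  have hbi : ∀ i : {v : Fin n → ZMod 2 // v ≠ 0}, b i = e i.1 := fun i => (he i.1 i.2).symm
  have hcard1 : Fintype.card
      {i : {v : Fin n → ZMod 2 // v ≠ 0} // f (f (e i.1)) = e i.1} ≤ 2 * s := by
    refine block_card_le b f ?_ ?_ _ ?_ r s hchar
    · intro i
      rcases hfe i.1 with h | h
      · left; rw [hbi]; exact h
      · by_cases h0 : α + i.1 = 0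
        · left; rw [hbi, h, h0, he0]
        · right; exact ⟨⟨α + i.1, h0⟩, by rw [hbi i, h, he _ h0]⟩
    · intro i; rw [hbi]; exact hf2 i.1
    · intro i; rw [hbi]
  set Q : (Fin n → ZMod 2) → Prop := fun γ => γ ≠ 0 ∧ f (f (e γ)) = e γ with hQdef
  set Φ : Finset (Fin n → ZMod 2) := Finset.univ.filter Q with hPhidef
  have hΦmem : ∀ γ, γ ∈ Φ ↔ Q γ := by intro γ; simp [hPhidef]
  have hΦcard : Φ.card ≤ 2 * s := by
    have h1 : Φ.card = Fintype.card {γ // Q γ} := (Fintype.card_subtype Q).symm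
    have h2 : Fintype.card {γ // Q γ} =
        Fintype.card {i : {v : Fin n → ZMod 2 // v ≠ 0} // f (f (e i.1)) = e i.1} :=
      Fintype.card_congr
        (Equiv.subtypeSubtypeEquivSubtypeInter (fun v : Fin n → ZMod 2 => v ≠ 0)
          (fun v => f (f (e v)) = e v)).symm
    rw [h1, h2]; exact hcard1
  have hstep : ∀ γ, Q γ → f (e γ) = e (α + γ) ∧ Q (α + γ) := by
    rintro γ ⟨hγ0, hγ⟩
    have h1 : f (e γ) = e (α + γ) := by
      rcases hfe γ with h | h
      · exfalso; rw [h, map_zero] at hγ; exact hne_e γ hγ0 hγ.symm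
      · exact h
    have h2 : α + γ ≠ 0 := by
      intro h
      rw [h1, h, he0, map_zero] at hγ
      exact hne_e γ hγ0 hγ.symm
    refine ⟨h1, h2, ?_⟩
    have h3 : f (f (e (α + γ))) = f (f (f (e γ))) := by rw [h1]
    rw [h3, hγ, h1]
  have hstepne : ∀ γ : Fin n → ZMod 2, α + γ ≠ γ := by
    intro γ h
    apply hα
    calc α = α + (γ + γ) := by rw [haa, add_zero]
      _ = (α + γ) + γ := by rw [add_assoc]
      _ = γ + γ := by rw [h]
      _ = 0 := haa γ
  set S : Set L := ((fun γ => e γ) '' ↑Φ) ∪ {x | ∃ γ ∈ Φ, ∃ δ ∈ Φ, x = ⁅e γ, e δ⁆}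
    with hSdef
  set J : Submodule (ZMod 2) L := Submodule.span (ZMod 2) S with hJdef
  have hmem1 : ∀ γ ∈ Φ, e γ ∈ J :=
    fun γ hγ => Submodule.subset_span (Or.inl ⟨γ, hγ, rfl⟩)
  have hmem2 : ∀ γ ∈ Φ, ∀ δ ∈ Φ, ⁅e γ, e δ⁆ ∈ J :=
    fun γ hγ δ hδ => Submodule.subset_span (Or.inr ⟨γ, hγ, δ, hδ, rfl⟩)
  have hgrad : ∀ x y : L, f (f ⁅x, y⁆) = ⁅f (f x), y⁆ + ⁅x, f (f y)⁆ := by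
    intro x y
    have hd : ∀ u v : L, f ⁅u, v⁆ = ⁅f u, v⁆ + ⁅u, f v⁆ := by
      intro u v
      rw [hfap, hfap, hfap, leibniz_lie]
    rw [hd, map_add, hd, hd]
    have habel : ∀ a c d : L, (a + c) + (c + d) = a + d := by
      intro a c d
      rw [show (a + c) + (c + d) = a + d + (c + c) by abel, hxx, add_zero]
    exact habel _ _ _
  have heJ : ∀ (β : Fin n → ZMod 2), ∀ γ ∈ Φ, ⁅e β, e γ⁆ ∈ J := by
    intro β γ hγ
    by_cases hβ0 : β = 0
    · rw [hβ0, he0, zero_lie]; exact J.zero_mem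
    by_cases hβΦ : β ∈ Φ
    · exact hmem2 β hβΦ γ hγ
    have hfβ : f (f (e β)) = 0 := by
      rcases hf2 β with h | h
      · exact h
      · exact absurd ((hΦmem β).mpr ⟨hβ0, h⟩) hβΦ
    obtain ⟨hγ0, hγ2⟩ := (hΦmem γ).mp hγ
    rcases hbr β γ with h | h
    · rw [h]; exact J.zero_mem
    rw [h]
    by_cases hβγ : β + γ = 0
    · rw [hβγ, he0]; exact J.zero_mem
    have hQβγ : f (f (e (β + γ))) = e (β + γ) := by
      rw [← h, hgrad, hfβ, zero_lie, zero_add, hγ2, h]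
    exact hmem1 _ ((hΦmem _).mpr ⟨hβγ, hQβγ⟩)
  have hneg : ∀ x : L, -x = x := fun x => neg_eq_of_add_eq_zero_left (hxx x)
  have hbasis_span : ∀ (m : L),
      (∀ i : {v : Fin n → ZMod 2 // v ≠ 0}, ⁅b i, m⁆ ∈ J) → ∀ x : L, ⁅x, m⁆ ∈ J := by
    intro m hm x
    have hx : x ∈ Submodule.span (ZMod 2) (Set.range b) := by
      rw [b.span_eq]; trivial
    refine Submodule.span_induction ?_ ?_ ?_ ?_ hx
    · rintro z ⟨i, rfl⟩; exact hm i
    · rw [zero_lie]; exact J.zero_mem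
    · intro u v _ _ hu hv; rw [add_lie]; exact J.add_mem hu hv
    · intro c u _ hu; rw [smul_lie]; exact J.smul_mem c hu
  have hJlie : ∀ (x m : L), m ∈ J → ⁅x, m⁆ ∈ J := by
    intro x m hm
    induction hm using Submodule.span_induction with
    | mem z hz =>
      rcases hz with ⟨γ, hγ, rfl⟩ | ⟨γ, hγ, δ, hδ, hzeq⟩
      · exact hbasis_span _ (fun i => by rw [hbi i]; exact heJ i.1 γ hγ) x
      · subst hzeq
        refine hbasis_span _ (fun i => ?_) x
        rw [hbi i, leibniz_lie]
        refine J.add_mem ?_ ?_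
        · rcases hbr i.1 γ with h | h
          · rw [h, zero_lie]; exact J.zero_mem
          · rw [h]; exact heJ _ δ hδ
        · rcases hbr i.1 δ with h | h
          · rw [h, lie_zero]; exact J.zero_mem
          · rw [h]
            have hsw : ⁅e γ, e (i.1 + δ)⁆ = ⁅e (i.1 + δ), e γ⁆ := by
              rw [← lie_skew, hneg]
            rw [hsw]; exact heJ _ γ hγ
    | zero => rw [lie_zero]; exact J.zero_mem
    | add u v _ _ hu hv => rw [lie_add]; exact J.add_mem hu hv
    | smul c u _ hu => rw [lie_smul]; exact J.smul_mem c hu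
  set JL : LieIdeal (ZMod 2) L := ⟨J, fun {x m} hm => hJlie x m hm⟩ with hJLdef
  have hΦne : ∃ γ, γ ∈ Φ := by
    by_contra hcon
    push_neg at hcon
    have hf20 : f * f = 0 := by
      apply b.ext
      intro i
      show f (f (b i)) = 0
      rw [hbi i]
      rcases hf2 i.1 with h | h
      · exact h
      · exact absurd ((hΦmem i.1).mpr ⟨i.2, h⟩) (hcon i.1)
    have hnil : IsNilpotent f := ⟨2, by rw [pow_two]; exact hf20⟩
    have hXpow := IsNilpotent.charpoly_eq_X_pow_finrank hnil
    rw [hchar] at hXpow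
    have hev := congrArg (Polynomial.eval (1 : ZMod 2)) hXpow
    have h2s : 2 * s ≠ 0 := by omega
    simp [Polynomial.eval_pow, Polynomial.eval_mul, h2s] at hev
  obtain ⟨γ₀, hγ₀⟩ := hΦne
  have hJtop : JL = ⊤ := by
    rcases LieAlgebra.IsSimple.eq_bot_or_eq_top JL with h | h
    · exfalso
      have hm : e γ₀ ∈ JL := hmem1 γ₀ hγ₀
      rw [h] at hm
      have h0 : e γ₀ = 0 := by simpa using hm
      exact hne_e γ₀ ((hΦmem γ₀).mp hγ₀).1 h0
    · exact h
  have hall : ∀ x : L, x ∈ J := by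
    intro x
    have hx : x ∈ JL := by rw [hJtop]; trivial
    exact hx
  set Dp : Finset ((Fin n → ZMod 2) × (Fin n → ZMod 2)) :=
    (Φ ×ˢ Φ).filter (fun p => p.1 ≠ p.2 ∧ p.1 + p.2 ≠ α) with hDpdef
  set Sg : Finset (Fin n → ZMod 2) := Dp.image (fun p => p.1 + p.2) with hSgdef
  set T : Finset (Fin n → ZMod 2) := (Φ ∪ Sg) ∪ {α} with hTdef
  have hsumne : ∀ γ δ : Fin n → ZMod 2, γ ≠ δ → γ + δ ≠ 0 := by
    intro γ δ h h0
    apply h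
    calc γ = γ + (δ + δ) := by rw [haa, add_zero]
      _ = (γ + δ) + δ := by rw [add_assoc]
      _ = δ := by rw [h0, zero_add]
  have hTne : ∀ γ ∈ T, γ ≠ 0 := by
    intro γ hγ
    rw [hTdef, Finset.mem_union, Finset.mem_union] at hγ
    rcases hγ with (hγ | hγ) | hγ
    · exact ((hΦmem γ).mp hγ).1
    · rw [hSgdef, Finset.mem_image] at hγ
      obtain ⟨p, hp, rfl⟩ := hγ
      rw [hDpdef, Finset.mem_filter] at hp
      exact hsumne p.1 p.2 hp.2.1
    · rw [Finset.mem_singleton] at hγ; subst hγ; exact hα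
  have hspanT : ∀ x : L, x ∈ Submodule.span (ZMod 2) ((fun γ => e γ) '' ↑T) := by
    intro x
    have hsub : S ⊆ ↑(Submodule.span (ZMod 2) ((fun γ => e γ) '' ↑T)) := by
      rintro z (⟨γ, hγ, rfl⟩ | ⟨γ, hγ, δ, hδ, rfl⟩)
      · refine Submodule.subset_span ⟨γ, ?_, rfl⟩
        simp only [hTdef, Finset.coe_union, Set.mem_union]
        exact Or.inl (Or.inl (by simpa using hγ))
      · rcases hbr γ δ with h | h
        · rw [h]; exact zero_mem _
        · rw [h]
          by_cases h0 : γ + δ = 0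
          · rw [h0, he0]; exact zero_mem _
          by_cases hA : γ + δ = α
          · refine Submodule.subset_span ⟨γ + δ, ?_, rfl⟩
            simp only [hTdef, Finset.coe_union, Set.mem_union]
            exact Or.inr (by simp [hA])
          · have hγδ : γ ≠ δ := by
              intro hh; rw [hh, haa] at h0; exact h0 rfl
            refine Submodule.subset_span ⟨γ + δ, ?_, rfl⟩
            simp only [hTdef, Finset.coe_union, Set.mem_union]
            refine Or.inl (Or.inr ?_)
            simp only [hSgdef, Finset.coe_image, Set.mem_image]
            refine ⟨(γ, δ), ?_, rfl⟩
            simp only [hDpdef, Finset.mem_coe, Finset.mem_filter, Finset.mem_product]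
            exact ⟨⟨hγ, hδ⟩, hγδ, hA⟩
    have hle := Submodule.span_le.mpr hsub
    exact hle (hall x)
  have hTall : ∀ i : {v : Fin n → ZMod 2 // v ≠ 0}, i.1 ∈ T := by
    intro i
    by_contra hnot
    have h1 : (fun γ => e γ) '' ↑T ⊆ b '' {j : {v : Fin n → ZMod 2 // v ≠ 0} | j.1 ∈ T} := by
      rintro z ⟨γ, hγ, rfl⟩
      exact ⟨⟨γ, hTne γ (by simpa using hγ)⟩, by simpa using hγ, (he γ _).symm⟩
    have h2 : b i ∈ Submodule.span (ZMod 2) (b '' {j | j.1 ∈ T}) :=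
      Submodule.span_mono h1 (by rw [hbi i]; exact hspanT (e i.1))
    exact b.linearIndependent.notMem_span_image hnot h2
  have hcardι : Fintype.card {v : Fin n → ZMod 2 // v ≠ 0} = 2 ^ n - 1 := by
    have h1 : Fintype.card {v : Fin n → ZMod 2 // ¬ (v = 0)} =
        Fintype.card (Fin n → ZMod 2) - Fintype.card {v : Fin n → ZMod 2 // v = 0} :=
      Fintype.card_subtype_compl _
    have h2 : Fintype.card {v : Fin n → ZMod 2 // v = 0} = 1 := Fintype.card_subtype_eq 0
    have h3 : Fintype.card (Fin n → ZMod 2) = 2 ^ n := by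
      rw [Fintype.card_fun]; simp
    have h0 : Fintype.card {v : Fin n → ZMod 2 // v ≠ 0} =
        Fintype.card {v : Fin n → ZMod 2 // ¬ (v = 0)} :=
      Fintype.card_congr (Equiv.subtypeEquivRight (fun v => Iff.rfl))
    rw [h0, h1, h2, h3]
  have hTcard : 2 ^ n - 1 ≤ T.card := by
    have hinj := Finset.card_le_card_of_injOn
      (s := (Finset.univ : Finset {v : Fin n → ZMod 2 // v ≠ 0})) (t := T)
      (fun i : {v : Fin n → ZMod 2 // v ≠ 0} => i.1)
      (fun i _ => hTall i)
      (fun a _ c _ h => Subtype.ext h)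
    rwa [Finset.card_univ, hcardι] at hinj
  set m := Φ.card with hmdef
  have hΦpair : ∀ γ ∈ Φ, (α + γ) ∈ Φ := by
    intro γ hγ
    exact (hΦmem _).mpr (hstep γ ((hΦmem γ).mp hγ)).2
  have hDcard : Dp.card ≤ m * (m - 2) := by
    have hmaps : ∀ p ∈ Dp, Prod.fst p ∈ Φ := by
      intro p hp
      rw [hDpdef, Finset.mem_filter, Finset.mem_product] at hp
      exact hp.1.1
    rw [Finset.card_eq_sum_card_fiberwise hmaps]
    have hbound : ∀ γ ∈ Φ, (Dp.filter (fun p => p.1 = γ)).card ≤ m - 2 := by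
      intro γ hγ
      have hsub2 : Dp.filter (fun p => p.1 = γ) ⊆ ({γ} ×ˢ (Φ \ {γ, α + γ})) := by
        rintro ⟨a, c⟩ hp
        simp only [Finset.mem_filter, hDpdef, Finset.mem_product] at hp
        obtain ⟨⟨⟨ha, hc⟩, hne, hsum⟩, heq⟩ := hp
        subst heq
        simp only [Finset.mem_product, Finset.mem_singleton, Finset.mem_sdiff,
          Finset.mem_insert, Finset.mem_singleton]
        push_neg
        refine ⟨trivial, hc, fun hh => hne hh.symm, fun hh => ?_⟩
        apply hsum
        rw [hh, add_comm α a, ← add_assoc, haa, zero_add]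
      have hsubΦ : ({γ, α + γ} : Finset _) ⊆ Φ := by
        intro z hz
        rw [Finset.mem_insert, Finset.mem_singleton] at hz
        rcases hz with rfl | rfl
        · exact hγ
        · exact hΦpair γ hγ
      have hc2 : ({γ, α + γ} : Finset (Fin n → ZMod 2)).card = 2 := by
        rw [Finset.card_insert_of_notMem (by simp [Ne.symm (hstepne γ)]),
          Finset.card_singleton]
      calc (Dp.filter (fun p => p.1 = γ)).card
          ≤ ({γ} ×ˢ (Φ \ {γ, α + γ})).card := Finset.card_le_card hsub2
        _ = (Φ \ {γ, α + γ}).card := by rw [Finset.card_product, Finset.card_singleton, one_mul]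
        _ = m - 2 := by rw [Finset.card_sdiff_of_subset hsubΦ, hc2]
    calc ∑ γ ∈ Φ, (Dp.filter (fun p => p.1 = γ)).card
        ≤ ∑ _γ ∈ Φ, (m - 2) := Finset.sum_le_sum hbound
      _ = m * (m - 2) := by rw [Finset.sum_const, smul_eq_mul]
  have hfiber : ∀ σ ∈ Sg, 4 ≤ (Dp.filter (fun p => p.1 + p.2 = σ)).card := by
    intro σ hσ
    rw [hSgdef, Finset.mem_image] at hσ
    obtain ⟨⟨γ, δ⟩, hp, hpσ⟩ := hσ
    rw [hDpdef, Finset.mem_filter, Finset.mem_product] at hp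
    obtain ⟨⟨hγ, hδ⟩, hne, hsane⟩ := hp
    simp only at hne hsane hpσ
    have hσα : σ ≠ α := by rw [← hpσ]; exact hsane
    have hcross : ∀ a c : Fin n → ZMod 2, (α + a) + (α + c) = a + c := by
      intro a c
      rw [add_add_add_comm, haa, zero_add]
    have hd3 : γ ≠ α + δ := by
      intro hh
      apply hσα
      rw [← hpσ, hh, add_assoc, haa, add_zero]
    have hd4 : δ ≠ α + γ := by
      intro hh
      apply hσα
      rw [← hpσ, hh, add_comm α γ, ← add_assoc, haa, zero_add]
    set F : Finset ((Fin n → ZMod 2) × (Fin n → ZMod 2)) :=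
      {(γ, δ), (δ, γ), (α + γ, α + δ), (α + δ, α + γ)} with hFdef
    have hFsub : F ⊆ Dp.filter (fun p => p.1 + p.2 = σ) := by
      intro p hp
      rw [hFdef] at hp
      simp only [Finset.mem_insert, Finset.mem_singleton] at hp
      rw [Finset.mem_filter, hDpdef, Finset.mem_filter, Finset.mem_product]
      rcases hp with rfl | rfl | rfl | rfl
      · exact ⟨⟨⟨hγ, hδ⟩, hne, hsane⟩, hpσ⟩
      · refine ⟨⟨⟨hδ, hγ⟩, fun hh => hne hh.symm, ?_⟩, ?_⟩
        · rw [add_comm]; exact hsane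
        · rw [add_comm]; exact hpσ
      · refine ⟨⟨⟨hΦpair γ hγ, hΦpair δ hδ⟩, ?_, ?_⟩, ?_⟩
        · intro hh; apply hne
          have := congrArg (fun z => α + z) hh
          simpa [haac] using this
        · rw [hcross]; exact hsane
        · rw [hcross]; exact hpσ
      · refine ⟨⟨⟨hΦpair δ hδ, hΦpair γ hγ⟩, ?_, ?_⟩, ?_⟩
        · intro hh; apply hne
          have := congrArg (fun z => α + z) hh
          simpa [haac] using this.symm
        · rw [hcross, add_comm]; exact hsane
        · rw [hcross, add_comm]; exact hpσ
    have hFcard : F.card = 4 := by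
      have hga : γ ≠ α + γ := Ne.symm (hstepne γ)
      have hda : δ ≠ α + δ := Ne.symm (hstepne δ)
      have haγδ : α + γ ≠ α + δ := by
        intro hh; apply hne
        have := congrArg (fun z => α + z) hh
        simpa [haac] using this
      have n2 : (α + γ, α + δ) ∉ ({(α + δ, α + γ)} : Finset _) := by
        simp only [Finset.mem_singleton, Prod.mk.injEq, not_and]
        exact fun hh _ => haγδ hh
      have n1 : (δ, γ) ∉ (insert (α + γ, α + δ) {(α + δ, α + γ)} : Finset _) := by
        simp only [Finset.mem_insert, Finset.mem_singleton, Prod.mk.injEq, not_or, not_and]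
        exact ⟨fun hh _ => hd4 hh, fun hh _ => hda hh⟩
      have n0 : (γ, δ) ∉
          (insert (δ, γ) (insert (α + γ, α + δ) {(α + δ, α + γ)}) : Finset _) := by
        simp only [Finset.mem_insert, Finset.mem_singleton, Prod.mk.injEq, not_or, not_and]
        exact ⟨fun hh _ => hne hh, fun hh _ => hga hh, fun hh _ => hd3 hh⟩
      rw [hFdef]
      rw [Finset.card_insert_of_notMem n0, Finset.card_insert_of_notMem n1,
        Finset.card_insert_of_notMem n2, Finset.card_singleton]
    calc 4 = F.card := hFcard.symm
      _ ≤ _ := Finset.card_le_card hFsub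
  have h4 : 4 * Sg.card ≤ Dp.card := by
    have hmaps : ∀ p ∈ Dp, p.1 + p.2 ∈ Sg := by
      intro p hp; exact Finset.mem_image_of_mem _ hp
    rw [Finset.card_eq_sum_card_fiberwise hmaps]
    calc 4 * Sg.card = ∑ _σ ∈ Sg, 4 := by rw [Finset.sum_const, smul_eq_mul, mul_comm]
      _ ≤ ∑ σ ∈ Sg, (Dp.filter (fun p => p.1 + p.2 = σ)).card := Finset.sum_le_sum hfiber
  have hTbound : T.card ≤ m + Sg.card + 1 := by
    calc T.card ≤ (Φ ∪ Sg).card + ({α} : Finset _).card := Finset.card_union_le _ _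
      _ ≤ (Φ.card + Sg.card) + 1 := by
          rw [Finset.card_singleton]
          exact Nat.add_le_add_right (Finset.card_union_le _ _) 1
  obtain ⟨k, rfl⟩ : ∃ k, s = k + 1 := ⟨s - 1, by omega⟩
  have e1 : m * (m - 2) ≤ (2 * (k + 1)) * (2 * (k + 1) - 2) :=
    Nat.mul_le_mul hΦcard (by omega)
  have e2 : (2 * (k + 1)) * (2 * (k + 1) - 2) = 4 * ((k + 1) * k) := by
    rw [show 2 * (k + 1) - 2 = 2 * k by omega]; ring
  have e4 : Sg.card ≤ (k + 1) * k := by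
    refine Nat.le_of_mul_le_mul_left ?_ (show 0 < 4 by norm_num)
    calc 4 * Sg.card ≤ Dp.card := h4
      _ ≤ m * (m - 2) := hDcard
      _ ≤ 4 * ((k + 1) * k) := by rw [← e2]; exact e1
  have hfin : 2 ^ n - 1 ≤ 2 * (k + 1) + (k + 1) * k + 1 := by
    calc 2 ^ n - 1 ≤ T.card := hTcard
      _ ≤ m + Sg.card + 1 := hTbound
      _ ≤ 2 * (k + 1) + (k + 1) * k + 1 := by
          exact Nat.add_le_add_right (Nat.add_le_add hΦcard e4) 1
  have hgoal : (k + 1) * (k + 1 + 1) = (k + 1) * k + 2 * (k + 1) := by ring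
  rw [hgoal]
  set A := (k + 1) * k with hAdef
  omega
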